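/- Let E be a nonzero real 4×4 antisymmetric matrix with Pf(E) = 0. Then the kernel of the linear map ψ_E : ℝ⁴ → ℝ⁴, v ↦ Ě·v, is a 2-dimensional subspace of ℝ⁴. -/

import Mathlib

/-- The Pfaffian of a real `4 × 4` antisymmetric matrix `E`:
`Pf(E) = E₀₁E₂₃ − E₀₂E₁₃ + E₀₃E₁₂`. -/
def Pf (E : Matrix (Fin 4) (Fin 4) ℝ) : ℝ :=
  E 0 1 * E 2 3 - E 0 2 * E 1 3 + E 0 3 * E 1 2

/-- The Hodge dual `Ě` of a real `4 × 4` antisymmetric matrix `E`. -/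
def hodge (E : Matrix (Fin 4) (Fin 4) ℝ) : Matrix (Fin 4) (Fin 4) ℝ :=
  !![0, E 2 3, -(E 1 3), E 1 2;
     -(E 2 3), 0, E 0 3, -(E 0 2);
     E 1 3, -(E 0 3), 0, E 0 1;
     -(E 1 2), E 0 2, -(E 0 1), 0]

/-- A nonzero real skew-symmetric matrix has rank at least `2`. -/
lemma two_le_rank_of_skew {n : ℕ} (M : Matrix (Fin n) (Fin n) ℝ)
    (hskew : M.transpose = -M) (hne : M ≠ 0) : 2 ≤ M.rank := by
  have hentry : ∀ i j, M j i = -M i j := by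
    intro i j
    have := congrFun (congrFun hskew i) j
    simpa [Matrix.transpose_apply] using this
  have hdiag : ∀ i, M i i = 0 := by
    intro i
    have := hentry i i
    linarith
  obtain ⟨i, j, hij⟩ : ∃ i j, M i j ≠ 0 := by
    by_contra h
    push_neg at h
    exact hne (by ext i j; simp [h i j])
  -- columns j and i of M
  set v : Fin n → ℝ := fun k => M k j with hv
  set w : Fin n → ℝ := fun k => M k i with hw
  have hvmem : v ∈ LinearMap.range (Matrix.mulVecLin M) := by
    refine ⟨Pi.single j 1, ?_⟩
    simp [Matrix.mulVecLin, Matrix.mulVec_single, hv]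
    rfl
  have hwmem : w ∈ LinearMap.range (Matrix.mulVecLin M) := by
    refine ⟨Pi.single i 1, ?_⟩
    simp [Matrix.mulVecLin, Matrix.mulVec_single, hw]
    rfl
  have hli : LinearIndependent ℝ ![v, w] := by
    rw [LinearIndependent.pair_iff]
    intro s t hst
    have h1 : s * M i j + t * M i i = 0 := by
      have := congrFun hst i
      simpa [hv, hw] using this
    have h2 : s * M j j + t * M j i = 0 := by
      have := congrFun hst j
      simpa [hv, hw] using this
    rw [hdiag i, mul_zero, add_zero] at h1
    rw [hdiag j, mul_zero, zero_add, hentry i j] at h2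
    constructor
    · rcases mul_eq_zero.mp h1 with h | h
      · exact h
      · exact absurd h hij
    · have : t * M i j = 0 := by linarith
      rcases mul_eq_zero.mp this with h | h
      · exact h
      · exact absurd h hij
  have hspan : Submodule.span ℝ (Set.range ![v, w]) ≤
      LinearMap.range (Matrix.mulVecLin M) := by
    rw [Submodule.span_le]
    intro x hx
    obtain ⟨k, rfl⟩ := hx
    fin_cases k
    · exact hvmem
    · exact hwmem
  have := Submodule.finrank_mono hspan
  rwa [finrank_span_eq_card hli, Fintype.card_fin] at this

lemma hodge_skew (E : Matrix (Fin 4) (Fin 4) ℝ) :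
    (hodge E).transpose = -(hodge E) := by
  ext i j
  fin_cases i <;> fin_cases j <;> simp [hodge]

lemma hodge_ne_zero (E : Matrix (Fin 4) (Fin 4) ℝ) (hskew : E.transpose = -E)
    (hne : E ≠ 0) : hodge E ≠ 0 := by
  intro h
  apply hne
  have hentry : ∀ i j : Fin 4, E j i = -E i j := by
    intro i j
    have := congrFun (congrFun hskew i) j
    simpa [Matrix.transpose_apply] using this
  have hdiag : ∀ i : Fin 4, E i i = 0 := by
    intro i; have := hentry i i; linarith
  have h01 : E 0 1 = 0 := by have := congrFun (congrFun h 2) 3; simpa [hodge] using this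
  have h02 : E 0 2 = 0 := by have := congrFun (congrFun h 3) 1; simpa [hodge] using this
  have h03 : E 0 3 = 0 := by have := congrFun (congrFun h 1) 2; simpa [hodge] using this
  have h12 : E 1 2 = 0 := by have := congrFun (congrFun h 0) 3; simpa [hodge] using this
  have h13 : E 1 3 = 0 := by have := congrFun (congrFun h 0) 2; simpa [hodge, neg_eq_zero] using this
  have h23 : E 2 3 = 0 := by have := congrFun (congrFun h 0) 1; simpa [hodge] using this
  have hz : ∀ i j : Fin 4, E i j = 0 → E j i = 0 := fun i j hij => by
    rw [hentry i j, hij, neg_zero]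
  ext i j
  fin_cases i <;> fin_cases j <;>
    first
      | exact hdiag _
      | exact h01 | exact h02 | exact h03 | exact h12 | exact h13 | exact h23
      | exact hz _ _ h01 | exact hz _ _ h02 | exact hz _ _ h03
      | exact hz _ _ h12 | exact hz _ _ h13 | exact hz _ _ h23

lemma key_mul (p q r s t u : ℝ) (A B : Matrix (Fin 4) (Fin 4) ℝ)
    (hA : A = !![0, u, -t, s; -u, 0, r, -q; t, -r, 0, p; -s, q, -p, 0])
    (hB : B = !![0, p, q, r; -p, 0, s, t; -q, -s, 0, u; -r, -t, -u, 0])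
    (h : p * u - q * t + r * s = 0) : A * B = 0 := by
  subst hA hB
  ext i j
  fin_cases i <;> fin_cases j <;>
    simp [Matrix.mul_apply, Fin.sum_univ_four] <;>
    first
      | ring1
      | linear_combination h
      | linear_combination -h

lemma hodge_mul_eq_zero (E : Matrix (Fin 4) (Fin 4) ℝ) (hskew : E.transpose = -E)
    (hPf : Pf E = 0) : hodge E * E = 0 := by
  have hentry : ∀ i j : Fin 4, E j i = -E i j := by
    intro i j
    have := congrFun (congrFun hskew i) j
    simpa [Matrix.transpose_apply] using this
  have hdiag : ∀ i : Fin 4, E i i = 0 := by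
    intro i; have := hentry i i; linarith
  have h10 := hentry 0 1
  have h20 := hentry 0 2
  have h30 := hentry 0 3
  have h21 := hentry 1 2
  have h31 := hentry 1 3
  have h32 := hentry 2 3
  unfold Pf at hPf
  refine key_mul (E 0 1) (E 0 2) (E 0 3) (E 1 2) (E 1 3) (E 2 3) _ _ ?_ ?_ hPf
  · ext i j
    fin_cases i <;> fin_cases j <;> rfl
  · ext i j
    fin_cases i <;> fin_cases j <;>
      first
        | exact hdiag _
        | rfl
        | exact h10 | exact h20 | exact h30 | exact h21 | exact h31 | exact h32

/-- For a nonzero real `4 × 4` antisymmetric matrix `E` with `Pf(E) = 0`,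
the kernel of the linear map `ψ_E : ℝ⁴ → ℝ⁴`, `v ↦ Ě ⬝ v`, is a 2-dimensional subspace. -/
theorem finrank_ker_hodge_mulVec_eq_two (E : Matrix (Fin 4) (Fin 4) ℝ)
    (hskew : E.transpose = -E) (hne : E ≠ 0) (hPf : Pf E = 0) :
    Module.finrank ℝ (LinearMap.ker (Matrix.mulVecLin (hodge E))) = 2 := by
  have hE2 : 2 ≤ E.rank := two_le_rank_of_skew E hskew hne
  have hH2 : 2 ≤ (hodge E).rank :=
    two_le_rank_of_skew (hodge E) (hodge_skew E) (hodge_ne_zero E hskew hne)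
  have hsum : (hodge E).rank + E.rank ≤ 4 := by
    have := Matrix.rank_add_rank_le_card_of_mul_eq_zero (hodge_mul_eq_zero E hskew hPf)
    simpa using this
  have hrank : (hodge E).rank = 2 := by omega
  have hrn := LinearMap.finrank_range_add_finrank_ker (Matrix.mulVecLin (hodge E))
  rw [Module.finrank_fin_fun] at hrn
  have : (hodge E).rank = Module.finrank ℝ (LinearMap.range (Matrix.mulVecLin (hodge E))) := rfl
  omega
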